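/- Let f(x) = Σ_{k=0}^m P_k(x)e^{kx} be an exponential polynomial with real polynomials P_k of exact degree n_k. Define f_0 = f and f_{k+1}(x) = f_k^{(n_k+1)}(x)·e^{−x} for k = 0,…,m−1. If f_k^{(s)}(0) ≥ 0 for all s = 0,…,n_k and k = 0,…,m, then all Taylor coefficients of f at 0 are non-negative; in particular f(x) ≥ 0 for all x ≥ 0. -/

import Mathlib

open Real

/-- Polynomials are smooth. -/
private lemma polyCD (P : Polynomial ℝ) : ContDiff ℝ (⊤ : ℕ∞) fun x : ℝ => P.eval x := by
  induction P using Polynomial.induction_on' with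
  | monomial k c =>
      simp only [Polynomial.eval_monomial]
      exact contDiff_const.mul (contDiff_id.pow k)
  | add p q hp hq => simpa [Polynomial.eval_add] using hp.add hq

/-- The operator `Q ↦ Q' + j • Q`. -/
noncomputable def Dop (j : ℕ) (Q : Polynomial ℝ) : Polynomial ℝ :=
  Q.derivative + (j : ℝ) • Q

private lemma Dop_natDegree_le (j : ℕ) (Q : Polynomial ℝ) :
    (Dop j Q).natDegree ≤ Q.natDegree := by
  refine (Polynomial.natDegree_add_le _ _).trans ?_
  simp only [sup_le_iff]
  exact ⟨(Polynomial.natDegree_derivative_le Q).trans (by omega),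
    (Polynomial.natDegree_smul_le _ _)⟩

private lemma Dop_iter_natDegree_le (j N : ℕ) (Q : Polynomial ℝ) :
    ((Dop j)^[N] Q).natDegree ≤ Q.natDegree := by
  induction N with
  | zero => simp
  | succ N ih =>
      rw [Function.iterate_succ_apply']
      exact (Dop_natDegree_le _ _).trans ih

private lemma term_hasDerivAt (Q : Polynomial ℝ) (j : ℕ) (x : ℝ) :
    HasDerivAt (fun x => Q.eval x * Real.exp (j * x))
      ((Dop j Q).eval x * Real.exp (j * x)) x := by
  have h1 : HasDerivAt (fun x : ℝ => Real.exp (j * x)) (Real.exp (j * x) * ((j : ℝ) * 1)) x :=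
    ((hasDerivAt_id x).const_mul (j : ℝ)).exp
  have h2 := (Q.hasDerivAt x).fun_mul h1
  refine h2.congr_deriv ?_
  simp [Dop]
  ring

private lemma term_contDiff (Q : Polynomial ℝ) (j : ℕ) :
    ContDiff ℝ (⊤ : ℕ∞) fun x => Q.eval x * Real.exp (j * x) :=
  (polyCD Q).mul (Real.contDiff_exp.comp (contDiff_const.mul contDiff_id))

private lemma iteratedDeriv_sumform (Q : ℕ → Polynomial ℝ) (r N : ℕ) :
    iteratedDeriv N (fun x => ∑ j ∈ Finset.range (r + 1), (Q j).eval x * Real.exp (j * x))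
      = fun x => ∑ j ∈ Finset.range (r + 1), ((Dop j)^[N] (Q j)).eval x * Real.exp (j * x) := by
  induction N with
  | zero => simp
  | succ N ih =>
      rw [iteratedDeriv_succ, ih]
      funext x
      have : HasDerivAt (fun x => ∑ j ∈ Finset.range (r + 1),
          ((Dop j)^[N] (Q j)).eval x * Real.exp (j * x))
          (∑ j ∈ Finset.range (r + 1),
            ((Dop j)^[N + 1] (Q j)).eval x * Real.exp (j * x)) x := by
        refine HasDerivAt.fun_sum fun j _ => ?_
        rw [Function.iterate_succ_apply']
        exact term_hasDerivAt _ j x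
      exact this.deriv

/-- Exponential-polynomial form. -/
def IsEP (n : ℕ → ℕ) (r k : ℕ) (g : ℝ → ℝ) : Prop :=
  ∃ Q : ℕ → Polynomial ℝ, (∀ j, (Q j).natDegree ≤ n (j + k)) ∧
    g = fun x => ∑ j ∈ Finset.range (r + 1), (Q j).eval x * Real.exp (j * x)

private lemma IsEP.contDiff {n : ℕ → ℕ} {r k : ℕ} {g : ℝ → ℝ} (h : IsEP n r k g) :
    ContDiff ℝ (⊤ : ℕ∞) g := by
  obtain ⟨Q, -, rfl⟩ := h
  exact ContDiff.sum fun j _ => term_contDiff _ _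

private lemma IsEP.step {n : ℕ → ℕ} {r k : ℕ} {g : ℝ → ℝ} (h : IsEP n (r + 1) k g) :
    IsEP n r (k + 1) (fun x => iteratedDeriv (n k + 1) g x * Real.exp (-x)) := by
  obtain ⟨Q, hQ, rfl⟩ := h
  refine ⟨fun j => (Dop (j + 1))^[n k + 1] (Q (j + 1)), fun j => ?_, ?_⟩
  · refine (Dop_iter_natDegree_le _ _ _).trans ?_
    have := hQ (j + 1)
    simpa [Nat.add_comm, Nat.add_assoc, Nat.add_left_comm] using this
  · funext x
    rw [iteratedDeriv_sumform]
    rw [Finset.sum_mul, Finset.sum_range_succ']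
    have h0 : (Dop 0)^[n k + 1] (Q 0) = 0 := by
      have hD : Dop 0 = fun Q : Polynomial ℝ => Q.derivative := by
        funext Q; simp [Dop]
      rw [hD]
      refine Polynomial.iterate_derivative_eq_zero ?_
      have := hQ 0
      simp only [Nat.zero_add] at this
      omega
    rw [h0]
    simp only [Polynomial.eval_zero, zero_mul, Nat.cast_zero, add_zero]
    refine Finset.sum_congr rfl fun j _ => ?_
    rw [mul_assoc, ← Real.exp_add]
    congr 2
    push_cast
    ring

private lemma stepdown {h : ℝ → ℝ} (hh : ContDiff ℝ (⊤ : ℕ∞) h) (s : ℕ)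
    (h0 : 0 ≤ iteratedDeriv s h 0)
    (hd : ∀ x, 0 ≤ x → 0 ≤ iteratedDeriv (s + 1) h x) :
    ∀ x, 0 ≤ x → 0 ≤ iteratedDeriv s h x := by
  intro x hx
  have hsm : ContDiff ℝ (⊤ : ℕ∞) (iteratedDeriv s h) := by
    rw [iteratedDeriv_eq_iterate]; exact hh.iterate_deriv s
  have hmono : MonotoneOn (iteratedDeriv s h) (Set.Ici 0) := by
    refine monotoneOn_of_deriv_nonneg (convex_Ici 0) hsm.continuous.continuousOn
      (hsm.differentiable (by norm_num)).differentiableOn ?_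
    intro y hy
    rw [interior_Ici] at hy
    have := hd y (le_of_lt hy)
    rwa [iteratedDeriv_succ] at this
  exact h0.trans (hmono Set.self_mem_Ici hx hx)

private lemma nonneg_chain {h : ℝ → ℝ} (hh : ContDiff ℝ (⊤ : ℕ∞) h) (N : ℕ)
    (h0 : ∀ s ≤ N, 0 ≤ iteratedDeriv s h 0)
    (hd : ∀ x, 0 ≤ x → 0 ≤ iteratedDeriv (N + 1) h x) :
    ∀ s ≤ N, ∀ x, 0 ≤ x → 0 ≤ iteratedDeriv s h x := by
  have key : ∀ d, ∀ x, 0 ≤ x → 0 ≤ iteratedDeriv (N - d) h x := by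
    intro d
    induction d with
    | zero =>
        simpa using stepdown hh N (h0 N le_rfl) hd
    | succ d ih =>
        rcases le_or_gt (d + 1) N with hle | hlt
        · have heq : N - (d + 1) + 1 = N - d := by omega
          refine stepdown hh (N - (d + 1)) (h0 _ (by omega)) ?_
          rwa [heq]
        · have : N - (d + 1) = N - d := by omega
          rwa [this]
  intro s hs
  have := key (N - s)
  have heq : N - (N - s) = s := by omega
  rwa [heq] at this

private lemma pascal_sum (a : ℕ → ℝ) (N : ℕ) :
    ∑ l ∈ Finset.range (N + 1), (N.choose l : ℝ) * a (l + 1)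
      + ∑ l ∈ Finset.range (N + 1), (N.choose l : ℝ) * a l
      = ∑ l ∈ Finset.range (N + 2), ((N + 1).choose l : ℝ) * a l := by
  rw [Finset.sum_range_succ' (fun l => ((N + 1).choose l : ℝ) * a l)]
  rw [Finset.sum_range_succ' (fun l => (N.choose l : ℝ) * a l)]
  simp only [Nat.choose_succ_succ, Nat.choose_zero_right, Nat.cast_one, Nat.cast_add, one_mul]
  have : ∑ l ∈ Finset.range (N + 1), ((N.choose l : ℝ) + (N.choose (l + 1) : ℝ)) * a (l + 1)
      = ∑ l ∈ Finset.range (N + 1), (N.choose l : ℝ) * a (l + 1)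
        + ∑ l ∈ Finset.range (N + 1), (N.choose (l + 1) : ℝ) * a (l + 1) := by
    rw [← Finset.sum_add_distrib]
    exact Finset.sum_congr rfl fun l _ => by ring
  rw [this]
  have : ∑ l ∈ Finset.range (N + 1), (N.choose (l + 1) : ℝ) * a (l + 1)
      = ∑ l ∈ Finset.range N, (N.choose (l + 1) : ℝ) * a (l + 1) := by
    rw [Finset.sum_range_succ]
    simp
  rw [this]
  ring

private lemma leib {g : ℝ → ℝ} (hg : ContDiff ℝ (⊤ : ℕ∞) g) (N : ℕ) :
    iteratedDeriv N (fun x => g x * Real.exp x)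
      = fun x => (∑ l ∈ Finset.range (N + 1),
          (N.choose l : ℝ) * iteratedDeriv l g x) * Real.exp x := by
  have hsm : ∀ l : ℕ, ContDiff ℝ (⊤ : ℕ∞) (iteratedDeriv l g) := by
    intro l; rw [iteratedDeriv_eq_iterate]; exact hg.iterate_deriv l
  induction N with
  | zero => simp
  | succ N ih =>
      rw [iteratedDeriv_succ, ih]
      funext x
      have hterm : ∀ l : ℕ, HasDerivAt (iteratedDeriv l g) (iteratedDeriv (l + 1) g x) x := by
        intro l
        rw [iteratedDeriv_succ]
        exact (((hsm l).differentiable (by norm_num)) x).hasDerivAt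
      have hsum : HasDerivAt (fun x => ∑ l ∈ Finset.range (N + 1),
          (N.choose l : ℝ) * iteratedDeriv l g x)
          (∑ l ∈ Finset.range (N + 1), (N.choose l : ℝ) * iteratedDeriv (l + 1) g x) x :=
        HasDerivAt.fun_sum fun l _ => (hterm l).const_mul _
      have hprod := hsum.fun_mul (Real.hasDerivAt_exp x)
      rw [hprod.deriv]
      rw [show (∑ l ∈ Finset.range (N + 1), (N.choose l : ℝ) * iteratedDeriv (l + 1) g x)
            * Real.exp x
          + (∑ l ∈ Finset.range (N + 1), (N.choose l : ℝ) * iteratedDeriv l g x) * Real.exp x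
          = (∑ l ∈ Finset.range (N + 1), (N.choose l : ℝ) * iteratedDeriv (l + 1) g x
            + ∑ l ∈ Finset.range (N + 1), (N.choose l : ℝ) * iteratedDeriv l g x)
            * Real.exp x by ring]
      rw [pascal_sum (fun l => iteratedDeriv l g x) N]

theorem exp_poly_algorithm (m : ℕ) (P : ℕ → Polynomial ℝ) (n : ℕ → ℕ)
    (f : ℝ → ℝ)
    (hdeg : ∀ k ≤ m, (P k).degree = (n k : ℕ))
    (hf : f = fun x => ∑ k ∈ Finset.range (m + 1), (P k).eval x * Real.exp (k * x))
    (fseq : ℕ → (ℝ → ℝ))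
    (hfseq0 : fseq 0 = f)
    (hfseqsucc : ∀ k < m, fseq (k + 1) =
      fun x => iteratedDeriv (n k + 1) (fseq k) x * Real.exp (-x))
    (hcond : ∀ k ≤ m, ∀ s ≤ n k, 0 ≤ iteratedDeriv s (fseq k) 0) :
    (∀ j : ℕ, 0 ≤ iteratedDeriv j f 0) ∧ ∀ x : ℝ, 0 ≤ x → 0 ≤ f x := by
  -- every fseq k has exponential-polynomial form
  have hEP : ∀ k ≤ m, IsEP n (m - k) k (fseq k) := by
    intro k
    induction k with
    | zero =>
        intro _
        refine ⟨fun j => if j ≤ m then P j else 0, fun j => ?_, ?_⟩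
        · by_cases hj : j ≤ m
          · simp only [hj, if_true]
            have := hdeg j hj
            have : (P j).natDegree = n j := Polynomial.natDegree_eq_of_degree_eq_some this
            simp [this]
          · simp [hj]
        · rw [hfseq0, hf]
          simp only [Nat.sub_zero]
          funext x
          refine Finset.sum_congr rfl fun j hj => ?_
          rw [Finset.mem_range] at hj
          simp [Nat.lt_succ_iff.mp hj]
    | succ k ih =>
        intro hk1
        have hk : k < m := by omega
        have h1 := ih (le_of_lt hk)
        have h2 : m - k = (m - (k + 1)) + 1 := by omega
        rw [h2] at h1
        rw [hfseqsucc k hk]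
        exact h1.step
  have hsmooth : ∀ k ≤ m, ContDiff ℝ (⊤ : ℕ∞) (fseq k) := fun k hk => (hEP k hk).contDiff
  -- the key claim
  have key : ∀ d ≤ m, (∀ j : ℕ, 0 ≤ iteratedDeriv j (fseq (m - d)) 0)
      ∧ ∀ x : ℝ, 0 ≤ x → 0 ≤ fseq (m - d) x := by
    intro d
    induction d with
    | zero =>
        intro _
        simp only [Nat.sub_zero]
        obtain ⟨Q, hQ, hfm⟩ := hEP m le_rfl
        have hiter : ∀ N, iteratedDeriv N (fseq m)
            = fun x => (Polynomial.derivative^[N] (Q 0)).eval x * Real.exp (0 * x) := by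
          intro N
          rw [hfm]
          have := iteratedDeriv_sumform Q (m - m) N
          simp only [Nat.sub_self, Finset.range_one, Finset.sum_singleton, Nat.cast_zero]
            at this ⊢
          rw [this]
          have hD : Dop 0 = fun Q : Polynomial ℝ => Q.derivative := by
            funext Q; simp [Dop]
          simp [hD]
        have hzero : ∀ N, n m < N → iteratedDeriv N (fseq m) = 0 := by
          intro N hN
          rw [hiter N]
          have : Polynomial.derivative^[N] (Q 0) = 0 := by
            refine Polynomial.iterate_derivative_eq_zero ?_
            have := hQ 0
            simp only [Nat.zero_add] at this
            omega
          funext x; simp [this]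
        constructor
        · intro j
          rcases le_or_gt j (n m) with hj | hj
          · exact hcond m le_rfl j hj
          · rw [hzero j hj]; simp
        · have := nonneg_chain (hsmooth m le_rfl) (n m) (hcond m le_rfl)
            (fun x _ => by rw [hzero (n m + 1) (by omega)]; simp)
          simpa using this 0 (Nat.zero_le _)
    | succ d ih =>
        intro hd1
        set k := m - (d + 1) with hkdef
        have hk : k < m := by omega
        have hkd : k + 1 = m - d := by omega
        have IH := ih (by omega)
        rw [← hkd] at IH
        have hrew : iteratedDeriv (n k + 1) (fseq k) = fun x => fseq (k + 1) x * Real.exp x := by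
          funext x
          rw [hfseqsucc k hk]
          rw [mul_assoc, ← Real.exp_add, neg_add_cancel, Real.exp_zero, mul_one]
        have hsmk : ContDiff ℝ (⊤ : ℕ∞) (fseq k) := hsmooth k (le_of_lt hk)
        have hsmk1 : ContDiff ℝ (⊤ : ℕ∞) (fseq (k + 1)) := hsmooth (k + 1) (by omega)
        have hdnn : ∀ x, 0 ≤ x → 0 ≤ iteratedDeriv (n k + 1) (fseq k) x := by
          intro x hx
          rw [hrew]
          exact mul_nonneg (IH.2 x hx) (Real.exp_pos x).le
        constructor
        · intro j
          rcases le_or_gt j (n k) with hj | hj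
          · exact hcond k (le_of_lt hk) j hj
          · obtain ⟨i, rfl⟩ : ∃ i, j = i + (n k + 1) := ⟨j - (n k + 1), by omega⟩
            have hcomp : iteratedDeriv (i + (n k + 1)) (fseq k)
                = iteratedDeriv i (iteratedDeriv (n k + 1) (fseq k)) := by
              rw [iteratedDeriv_eq_iterate, iteratedDeriv_eq_iterate, iteratedDeriv_eq_iterate,
                Function.iterate_add_apply]
            rw [hcomp, hrew, leib hsmk1 i]
            simp only [Real.exp_zero, mul_one]
            refine Finset.sum_nonneg fun l _ => ?_
            exact mul_nonneg (Nat.cast_nonneg _) (IH.1 l)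
        · have := nonneg_chain hsmk (n k) (hcond k (le_of_lt hk)) hdnn
          simpa using this 0 (Nat.zero_le _)
  have hfinal := key m le_rfl
  rw [Nat.sub_self, hfseq0] at hfinal
  exact hfinal
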